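/- For all real x ≥ 3, the modified Bessel function of the first kind of order -1 satisfies (1/10)·e^x/√x < I_{-1}(x) < √(π/8)·e^x/√x. -/

import Mathlib

open Real

lemma centralBinom_sq_upper (m : ℕ) : (3*m+1) * (Nat.centralBinom m)^2 ≤ 16^m := by
  induction m with
  | zero => simp [Nat.centralBinom]
  | succ n ih =>
    have key := Nat.succ_mul_centralBinom_succ n
    have h1 : (n+1)^2 * ((3*(n+1)+1) * (Nat.centralBinom (n+1))^2) ≤ (n+1)^2 * 16^(n+1) := by
      have e : (n+1)^2 * (Nat.centralBinom (n+1))^2 = (2*(2*n+1)*Nat.centralBinom n)^2 := by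
        rw [← mul_pow, key]
      calc (n+1)^2 * ((3*(n+1)+1) * (Nat.centralBinom (n+1))^2)
          = (3*n+4) * ((n+1)^2 * (Nat.centralBinom (n+1))^2) := by ring
        _ = (4*(3*n+4)*(2*n+1)^2) * (Nat.centralBinom n)^2 := by rw [e]; ring
        _ ≤ (16*(3*n+1)*(n+1)^2) * (Nat.centralBinom n)^2 := by
            apply Nat.mul_le_mul_right
            nlinarith
        _ = (n+1)^2 * (16 * ((3*n+1) * (Nat.centralBinom n)^2)) := by ring
        _ ≤ (n+1)^2 * (16 * 16^n) := by
            exact Nat.mul_le_mul_left _ (Nat.mul_le_mul_left _ ih)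
        _ = (n+1)^2 * 16^(n+1) := by ring
    exact Nat.le_of_mul_le_mul_left h1 (by positivity)

lemma centralBinom_sq_lower (m : ℕ) : 16^(m+1) ≤ 4*(m+1) * (Nat.centralBinom (m+1))^2 := by
  induction m with
  | zero => decide
  | succ n ih =>
    have key := Nat.succ_mul_centralBinom_succ (n+1)
    have h1 : (n+2) * 16^(n+2) ≤ (n+2) * (4*(n+2)*(Nat.centralBinom (n+2))^2) := by
      calc (n+2) * 16^(n+2) = 16 * (n+2) * 16^(n+1) := by ring
        _ ≤ 16 * (n+2) * (4*(n+1)*(Nat.centralBinom (n+1))^2) := Nat.mul_le_mul_left _ ih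
        _ = (64*(n+2)*(n+1)) * (Nat.centralBinom (n+1))^2 := by ring
        _ ≤ (16*(2*(n+1)+1)^2) * (Nat.centralBinom (n+1))^2 := by
            apply Nat.mul_le_mul_right
            nlinarith
        _ = 4 * ((n+1+1) * Nat.centralBinom (n+1+1))^2 := by rw [key]; ring
        _ = (n+2) * (4*(n+2)*(Nat.centralBinom (n+2))^2) := by ring
    exact Nat.le_of_mul_le_mul_left h1 (by positivity)

lemma centralBinom_succ_factorial (m : ℕ) :
    Nat.centralBinom (m+1) * ((m+1).factorial * m.factorial) = 2 * (2*m+1).factorial := by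
  have h := Nat.choose_mul_factorial_mul_factorial (show m+1 ≤ 2*(m+1) by omega)
  have h2 : 2*(m+1) - (m+1) = m+1 := by omega
  rw [h2] at h
  have key : Nat.centralBinom (m+1) * ((m+1).factorial * (m+1).factorial)
      = (2*(m+1)).factorial := by
    rw [Nat.centralBinom, ← h]; ring
  have h3 : (2*(m+1)).factorial = (2*m+2) * (2*m+1).factorial := by
    have h5 : 2*(m+1) = (2*m+1)+1 := by omega
    rw [h5, Nat.factorial_succ]
  have h4 : (m+1).factorial = (m+1) * m.factorial := Nat.factorial_succ m
  apply Nat.eq_of_mul_eq_mul_left (show 0 < m+1 by omega)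
  calc (m+1) * (Nat.centralBinom (m+1) * ((m+1).factorial * m.factorial))
      = Nat.centralBinom (m+1) * ((m+1).factorial * ((m+1) * m.factorial)) := by ring
    _ = Nat.centralBinom (m+1) * ((m+1).factorial * (m+1).factorial) := by rw [← h4]
    _ = (2*(m+1)).factorial := key
    _ = (m+1) * (2 * (2*m+1).factorial) := by rw [h3]; ring

lemma exp_three_ge_twenty : (20:ℝ) ≤ Real.exp 3 := by
  have h3 : Real.exp 3 = (Real.exp 1)^3 := by
    rw [← Real.exp_nat_mul]; norm_num
  have h4 : (2.7182818283:ℝ)^3 ≤ (Real.exp 1)^3 :=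
    pow_le_pow_left₀ (by norm_num) Real.exp_one_gt_d9.le 3
  have h5 : (20:ℝ) ≤ (2.7182818283:ℝ)^3 := by norm_num
  linarith

lemma five_twelfths_lt_sqrt_pi_div_eight : (5/12 : ℝ) < Real.sqrt (Real.pi/8) := by
  have h9 : (5/12:ℝ) = Real.sqrt ((5/12)^2) := (Real.sqrt_sq (by norm_num)).symm
  rw [h9]
  apply Real.sqrt_lt_sqrt (by positivity)
  nlinarith [Real.pi_gt_three]

/-- The modified Bessel function of the first kind of order `-1`:
`I_{-1}(x) = ∑_{m≥0} (1/(m! Γ(m))) (x/2)^{2m-1}` (the `m = 0` term vanishes since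
`1/Γ(0) = 0`). -/
noncomputable def besselINegOne (x : ℝ) : ℝ :=
  ∑' m : ℕ, (1 / ((m.factorial : ℝ) * Real.Gamma m)) * (x / 2) ^ (2 * (m : ℤ) - 1)

set_option maxHeartbeats 2000000 in
theorem besselINegOne_bounds (x : ℝ) (hx : 3 ≤ x) :
    (1 / 10) * (Real.exp x / Real.sqrt x) < besselINegOne x ∧
      besselINegOne x < Real.sqrt (π / 8) * (Real.exp x / Real.sqrt x) := by
  have hx0 : (0:ℝ) < x := by linarith
  set s := Real.sqrt x with hs
  have hs0 : 0 < s := Real.sqrt_pos.2 hx0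
  have hs2 : s^2 = x := Real.sq_sqrt hx0.le
  -- basic sequences
  set c : ℕ → ℝ := fun m => x^(2*m+1) / (2*m+1).factorial with hc
  set d : ℕ → ℝ := fun m => x^(2*m+2) / (2*m+2).factorial with hd
  set e : ℕ → ℝ := fun m => x^(2*m) / (2*m).factorial with he
  set T : ℕ → ℝ := fun m => x^(2*m+1) / (2^(2*m+1) * (m+1).factorial * m.factorial) with hT
  set r : ℕ → ℝ := fun m => (Nat.centralBinom (m+1) : ℝ) / 4^(m+1) with hr
  set w : ℕ → ℝ := fun m => 2*(m:ℝ)+1+x with hw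
  have hw_pos : ∀ m, 0 < w m := fun m => by
    simp only [hw]; positivity
  have hfact : ∀ m:ℕ, (Nat.centralBinom (m+1) : ℝ) * (((m+1).factorial : ℝ) * (m.factorial : ℝ))
      = 2 * ((2*m+1).factorial : ℝ) := by
    intro m; exact_mod_cast congrArg (Nat.cast (R := ℝ)) (centralBinom_succ_factorial m)
  have hfac_pos : ∀ n : ℕ, (0:ℝ) < (n.factorial : ℝ) := by
    intro n; exact_mod_cast n.factorial_pos
  have hc_pos : ∀ m, 0 < c m := fun m => by
    simp only [hc]; positivity
  have hd_pos : ∀ m, 0 < d m := fun m => by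
    simp only [hd]; positivity
  have hr_pos : ∀ m, 0 < r m := fun m => by
    simp only [hr]
    have : 0 < Nat.centralBinom (m+1) := Nat.centralBinom_pos _
    positivity
  have hT_eq : ∀ m, T m = c m * r m := by
    intro m
    simp only [hT, hc, hr]
    rw [div_mul_div_comm, div_eq_div_iff (by positivity) (by positivity)]
    have h4 : (4:ℝ)^(m+1) = 2^(2*m+2) := by
      rw [show (4:ℝ) = 2^2 by norm_num, ← pow_mul, show 2*(m+1) = 2*m+2 from by ring]
    rw [h4]
    linear_combination (-(2 * x^(2*m+1) * (2:ℝ)^(2*m))) * hfact m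
  have hr_up : ∀ m : ℕ, (3*(m:ℝ)+4) * (r m)^2 ≤ 1 := by
    intro m
    have h := centralBinom_sq_upper (m+1)
    have hcast : ((3*(m+1)+1 : ℕ):ℝ) * ((Nat.centralBinom (m+1) : ℝ))^2 ≤ (16:ℝ)^(m+1) := by
      exact_mod_cast h
    have h16 : ((4:ℝ)^(m+1))^2 = (16:ℝ)^(m+1) := by
      rw [← pow_mul, mul_comm (m+1) 2, pow_mul]; norm_num
    simp only [hr, div_pow]
    rw [← mul_div_assoc, div_le_one (by positivity), h16]
    calc (3*(m:ℝ)+4) * ((Nat.centralBinom (m+1) : ℝ))^2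
        = ((3*(m+1)+1 : ℕ):ℝ) * ((Nat.centralBinom (m+1) : ℝ))^2 := by push_cast; ring
      _ ≤ (16:ℝ)^(m+1) := hcast
  have hr_lo : ∀ m : ℕ, 1 ≤ 4*((m:ℝ)+1) * (r m)^2 := by
    intro m
    have h := centralBinom_sq_lower m
    have hcast : (16:ℝ)^(m+1) ≤ ((4*(m+1):ℕ):ℝ) * ((Nat.centralBinom (m+1) : ℝ))^2 := by
      exact_mod_cast h
    have h16 : ((4:ℝ)^(m+1))^2 = (16:ℝ)^(m+1) := by
      rw [← pow_mul, mul_comm (m+1) 2, pow_mul]; norm_num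
    simp only [hr, div_pow]
    rw [← mul_div_assoc, le_div_iff₀ (by positivity), one_mul, h16]
    calc (16:ℝ)^(m+1) ≤ ((4*(m+1):ℕ):ℝ) * ((Nat.centralBinom (m+1) : ℝ))^2 := hcast
      _ = 4*((m:ℝ)+1) * ((Nat.centralBinom (m+1) : ℝ))^2 := by push_cast; ring
  have hr_le_one : ∀ m, r m ≤ 1 := by
    intro m
    nlinarith [hr_up m, hr_pos m, Nat.cast_nonneg (α := ℝ) m, sq_nonneg (r m - 1), sq_nonneg (r m)]
  -- per-term upper bound
  have hfs : ∀ m : ℕ, ((2*m+2).factorial : ℝ) = (2*(m:ℝ)+2) * ((2*m+1).factorial:ℝ) := by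
    intro m
    have h5 : (2*m+2) = (2*m+1)+1 := by omega
    rw [h5, Nat.factorial_succ]
    push_cast; ring
  have hd_eq : ∀ m : ℕ, d m = c m * x / (2*(m:ℝ)+2) := by
    intro m
    simp only [hd, hc]
    rw [hfs m, pow_succ]
    field_simp
  have hT_up : ∀ m, T m ≤ c m / (2*s) + d m / (3*s) := by
    intro m
    have hrm : r m ≤ 1/(2*s) + s/(6*((m:ℝ)+1)) := by
      rw [div_add_div _ _ (by positivity) (by positivity), le_div_iff₀ (by positivity)]
      nlinarith [sq_nonneg (s - 3*((m:ℝ)+1)*(r m)), hr_up m, hr_pos m,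
        Nat.cast_nonneg (α := ℝ) m, sq_nonneg (r m), hs0,
        mul_nonneg (mul_nonneg (Nat.cast_nonneg (α := ℝ) m) (sq_nonneg (r m))) hs0.le]
    have h1 : T m ≤ c m * (1/(2*s) + s/(6*((m:ℝ)+1))) := by
      rw [hT_eq m]
      exact mul_le_mul_of_nonneg_left hrm (hc_pos m).le
    have h2 : c m * (1/(2*s) + s/(6*((m:ℝ)+1))) = c m / (2*s) + d m / (3*s) := by
      rw [hd_eq m, ← hs2]
      field_simp
      ring
    linarith [h1, h2.le]
  -- per-term lower bound
  have hT_lo : ∀ m, s * (c m / w m) ≤ T m := by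
    intro m
    have key : s ≤ r m * w m := by
      simp only [hw]
      nlinarith [sq_nonneg (2*(r m)*s - 1), hr_lo m, hr_pos m, hs0, hs2,
        mul_nonneg (Nat.cast_nonneg (α := ℝ) m) (sq_nonneg (r m)),
        mul_pos (hr_pos m) hs0]
    rw [hT_eq m]
    have h1 : s / w m ≤ r m := by
      rw [div_le_iff₀ (hw_pos m)]
      linarith [key]
    calc s * (c m / w m) = c m * (s / w m) := by ring
      _ ≤ c m * r m := mul_le_mul_of_nonneg_left h1 (hc_pos m).le
  -- exp series and sums
  have hexp : ∀ y : ℝ, Real.exp y = ∑' n : ℕ, y^n / n.factorial := by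
    intro y
    rw [Real.exp_eq_exp_ℝ]
    exact congrFun NormedSpace.exp_eq_tsum_div y
  have hse : Summable e := by
    rw [he]
    exact (Real.summable_pow_div_factorial x).comp_injective
      (fun a b h => by dsimp at h; omega : Function.Injective (fun k : ℕ => 2*k))
  have hsc : Summable c := by
    rw [hc]
    exact (Real.summable_pow_div_factorial x).comp_injective
      (fun a b h => by dsimp at h; omega : Function.Injective (fun k : ℕ => 2*k+1))
  have hse' : Summable (fun k : ℕ => (-x)^(2*k) / ((2*k).factorial : ℝ)) :=
    (Real.summable_pow_div_factorial (-x)).comp_injective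
      (fun a b h => by dsimp at h; omega : Function.Injective (fun k : ℕ => 2*k))
  have hsc' : Summable (fun k : ℕ => (-x)^(2*k+1) / ((2*k+1).factorial : ℝ)) :=
    (Real.summable_pow_div_factorial (-x)).comp_injective
      (fun a b h => by dsimp at h; omega : Function.Injective (fun k : ℕ => 2*k+1))
  have hEO : (∑' k : ℕ, e k) + (∑' k : ℕ, c k) = Real.exp x := by
    rw [hexp x, hc, he]
    exact tsum_even_add_odd (f := fun n : ℕ => x^n / n.factorial)
      (by rw [he] at hse; exact hse) (by rw [hc] at hsc; exact hsc)
  have heven : ∀ k : ℕ, (-x)^(2*k) = x^(2*k) := by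
    intro k; rw [pow_mul, pow_mul, neg_sq]
  have hodd : ∀ k : ℕ, (-x)^(2*k+1) = -(x^(2*k+1)) := by
    intro k; rw [pow_succ, pow_succ, heven]; ring
  have hEO' : (∑' k : ℕ, e k) - (∑' k : ℕ, c k) = Real.exp (-x) := by
    rw [hexp (-x), ← tsum_even_add_odd (f := fun n : ℕ => (-x)^n / n.factorial) hse' hsc']
    have e1 : (fun k : ℕ => (-x)^(2*k)/((2*k).factorial:ℝ)) = e := by
      rw [he]; funext k; rw [heven]
    have e2 : (fun k : ℕ => (-x)^(2*k+1)/((2*k+1).factorial:ℝ))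
        = (fun k : ℕ => -(c k)) := by
      rw [hc]; funext k; rw [hodd]; ring
    rw [e1, e2, tsum_neg]; ring
  have hO : (∑' k : ℕ, c k) = Real.sinh x := by
    rw [Real.sinh_eq]; linarith
  have hE : (∑' k : ℕ, e k) = Real.cosh x := by
    rw [Real.cosh_eq]; linarith
  have hde : ∀ m : ℕ, d m = e (m+1) := by
    intro m; simp only [hd, he]
    rw [show 2*(m+1) = 2*m+2 from by ring]
  have hsd : Summable d := by
    have h1 : Summable (fun m => e (m+1)) := (summable_nat_add_iff 1).2 hse
    exact h1.congr (fun m => (hde m).symm)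
  have hD : (∑' m, d m) = Real.cosh x - 1 := by
    have h0 : e 0 = 1 := by simp [he]
    have h1 := Summable.tsum_eq_zero_add hse
    have h2 : (∑' m, e (m+1)) = Real.cosh x - 1 := by
      rw [← hE, h1, h0]; ring
    rw [← h2]
    exact tsum_congr hde
  -- summability of T and u
  have hT_pos : ∀ m, 0 < T m := fun m => by
    rw [hT_eq]; exact mul_pos (hc_pos m) (hr_pos m)
  have hsT : Summable T := by
    apply Summable.of_nonneg_of_le (fun m => (hT_pos m).le) (fun m => ?_) hsc
    rw [hT_eq]
    exact mul_le_of_le_one_right (hc_pos m).le (hr_le_one m)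
  have hsu : Summable (fun m => c m / w m) := by
    apply Summable.of_nonneg_of_le (fun m => by positivity) (fun m => ?_) hsc
    apply div_le_self (hc_pos m).le
    simp only [hw]
    have : (0:ℝ) ≤ (m:ℝ) := Nat.cast_nonneg m
    linarith
  have hv_eq : ∀ m, x * e m + x * c m = w m * c m := by
    intro m
    simp only [hw, hc, he]
    have hf21 : ((2*m+1).factorial : ℝ) = ((2*m:ℕ):ℝ) * ((2*m).factorial:ℝ) + ((2*m).factorial:ℝ) := by
      rw [Nat.factorial_succ]; push_cast; ring
    rw [hf21, pow_succ]
    have hfp : (0:ℝ) < ((2*m).factorial:ℝ) := hfac_pos _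
    have hfp2 : (0:ℝ) < ((2*m:ℕ):ℝ) * ((2*m).factorial:ℝ) + ((2*m).factorial:ℝ) := by positivity
    field_simp
    push_cast; ring
  have hsv : Summable (fun m => w m * c m) :=
    Summable.congr ((hse.mul_left x).add (hsc.mul_left x)) hv_eq
  have hV : (∑' m, w m * c m) = x * Real.exp x := by
    rw [← tsum_congr hv_eq, Summable.tsum_add (hse.mul_left x) (hsc.mul_left x),
        tsum_mul_left, tsum_mul_left, hE, hO]
    rw [← Real.cosh_add_sinh]; ring
  -- Cauchy–Schwarz
  have hU_nonneg : (0:ℝ) ≤ ∑' m, c m / w m := tsum_nonneg (fun m => by positivity)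
  have hCS : Real.sinh x ^ 2 ≤ (∑' m, c m / w m) * (x * Real.exp x) := by
    have hUV0 : (0:ℝ) ≤ (∑' m, c m / w m) * (x * Real.exp x) :=
      mul_nonneg hU_nonneg (by positivity)
    have hsum_le : ∀ F : Finset ℕ, (∑ m ∈ F, c m)
        ≤ Real.sqrt ((∑' m, c m / w m) * (x * Real.exp x)) := by
      intro F
      have e1 : ∀ m, Real.sqrt (c m / w m) * Real.sqrt (w m * c m) = c m := by
        intro m
        rw [← Real.sqrt_mul (by positivity : (0:ℝ) ≤ c m / w m)]
        rw [show c m / w m * (w m * c m) = (c m)^2 from by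
          field_simp; exact mul_div_cancel_right₀ _ (hw_pos m).ne']
        exact Real.sqrt_sq (hc_pos m).le
      have key := Finset.sum_mul_sq_le_sq_mul_sq F (fun m => Real.sqrt (c m / w m))
          (fun m => Real.sqrt (w m * c m))
      have h1 : (∑ m ∈ F, c m)^2 ≤ (∑ m ∈ F, c m / w m) * (∑ m ∈ F, w m * c m) := by
        calc (∑ m ∈ F, c m)^2
            = (∑ m ∈ F, Real.sqrt (c m / w m) * Real.sqrt (w m * c m))^2 := by
              rw [Finset.sum_congr rfl (fun m _ => (e1 m).symm)]
          _ ≤ (∑ m ∈ F, Real.sqrt (c m / w m)^2) * (∑ m ∈ F, Real.sqrt (w m * c m)^2) := key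
          _ = (∑ m ∈ F, c m / w m) * (∑ m ∈ F, w m * c m) := by
              rw [Finset.sum_congr rfl (fun m _ => Real.sq_sqrt (by positivity : (0:ℝ) ≤ c m / w m)),
                  Finset.sum_congr rfl (fun m _ => Real.sq_sqrt
                    (le_of_lt (mul_pos (hw_pos m) (hc_pos m))))]
      have h2 : (∑ m ∈ F, c m / w m) ≤ ∑' m, c m / w m :=
        Summable.sum_le_tsum F (fun m _ => by positivity) hsu
      have h3 : (∑ m ∈ F, w m * c m) ≤ x * Real.exp x := by
        rw [← hV]
        exact Summable.sum_le_tsum F (fun m _ => (mul_pos (hw_pos m) (hc_pos m)).le) hsv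
      have h4 : (∑ m ∈ F, c m)^2 ≤ (∑' m, c m / w m) * (x * Real.exp x) :=
        le_trans h1 (mul_le_mul h2 h3 (Finset.sum_nonneg
          (fun m _ => (mul_pos (hw_pos m) (hc_pos m)).le)) hU_nonneg)
      have h5 : (0:ℝ) ≤ ∑ m ∈ F, c m := Finset.sum_nonneg (fun m _ => (hc_pos m).le)
      exact (Real.le_sqrt h5 hUV0).2 h4
    have h6 : Real.sinh x ≤ Real.sqrt ((∑' m, c m / w m) * (x * Real.exp x)) := by
      rw [← hO]; exact Summable.tsum_le_of_sum_le hsc hsum_le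
    calc Real.sinh x ^2 ≤ Real.sqrt ((∑' m, c m / w m) * (x * Real.exp x))^2 :=
          pow_le_pow_left₀ (by positivity : (0:ℝ) ≤ Real.sinh x) h6 2
      _ = (∑' m, c m / w m) * (x * Real.exp x) := Real.sq_sqrt hUV0
  -- besselINegOne = ∑ T
  have hbessel : besselINegOne x = ∑' m, T m := by
    unfold besselINegOne
    have hfsucc : ∀ m : ℕ,
        (1 / ((((m+1:ℕ)).factorial : ℝ) * Real.Gamma ((m+1:ℕ) : ℝ)))
          * (x / 2) ^ (2 * ((m+1:ℕ) : ℤ) - 1) = T m := by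
      intro m
      have hg : Real.Gamma ((m+1 : ℕ) : ℝ) = (m.factorial : ℝ) := by
        push_cast
        exact Real.Gamma_nat_eq_factorial m
      have hz : (2 * ((m+1 : ℕ) : ℤ) - 1) = ((2*m+1 : ℕ) : ℤ) := by push_cast; ring
      rw [hg, hz, zpow_natCast, div_pow]
      simp only [hT]
      rw [div_mul_div_comm, one_mul]
      congr 1
      push_cast
      ring
    have hsf : Summable (fun m : ℕ =>
        (1 / ((m.factorial : ℝ) * Real.Gamma m)) * (x / 2) ^ (2 * (m : ℤ) - 1)) := by
      rw [← summable_nat_add_iff 1]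
      exact hsT.congr (fun m => (hfsucc m).symm)
    rw [Summable.tsum_eq_zero_add hsf]
    have h0 : (1 / (((0:ℕ).factorial : ℝ) * Real.Gamma ((0:ℕ):ℝ)))
        * (x / 2) ^ (2 * ((0:ℕ) : ℤ) - 1) = 0 := by
      simp [Real.Gamma_zero]
    rw [h0, zero_add]
    exact tsum_congr hfsucc
  -- upper bound
  have hupper_sum : (∑' m, T m) ≤ Real.sinh x / (2*s) + (Real.cosh x - 1)/(3*s) := by
    have hsg : Summable (fun m => c m/(2*s) + d m/(3*s)) :=
      (hsc.div_const _).add (hsd.div_const _)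
    calc (∑' m, T m) ≤ ∑' m, (c m/(2*s) + d m/(3*s)) := Summable.tsum_le_tsum hT_up hsT hsg
      _ = (∑' m, c m)/(2*s) + (∑' m, d m)/(3*s) := by
          rw [Summable.tsum_add (hsc.div_const _) (hsd.div_const _), tsum_div_const, tsum_div_const]
      _ = Real.sinh x / (2*s) + (Real.cosh x - 1)/(3*s) := by rw [hO, hD]
  have hup : besselINegOne x < Real.sqrt (π/8) * (Real.exp x / s) := by
    rw [hbessel]
    have h58 : (5/12 : ℝ) < Real.sqrt (π/8) := five_twelfths_lt_sqrt_pi_div_eight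
    have key : Real.sinh x/2 + (Real.cosh x - 1)/3 ≤ (5/12)*Real.exp x := by
      rw [Real.sinh_eq, Real.cosh_eq]
      have h10 := (Real.exp_pos (-x)).le
      linarith
    have heq2 : Real.sinh x/(2*s) + (Real.cosh x - 1)/(3*s)
        = (Real.sinh x/2 + (Real.cosh x - 1)/3)/s := by
      field_simp
    have h11 : (∑' m, T m) ≤ (5/12) * (Real.exp x / s) := by
      calc (∑' m, T m) ≤ Real.sinh x / (2*s) + (Real.cosh x - 1)/(3*s) := hupper_sum
        _ = (Real.sinh x/2 + (Real.cosh x - 1)/3)/s := heq2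
        _ ≤ ((5/12)*Real.exp x)/s := by gcongr
        _ = (5/12) * (Real.exp x / s) := by ring
    have h12 : (5/12) * (Real.exp x / s) < Real.sqrt (π/8) * (Real.exp x / s) :=
      mul_lt_mul_of_pos_right h58 (by positivity)
    linarith
  -- lower bound
  have hlow_sum : s * (Real.sinh x^2/(x*Real.exp x)) ≤ ∑' m, T m := by
    have hU_ge : Real.sinh x^2/(x*Real.exp x) ≤ ∑' m, c m / w m := by
      rw [div_le_iff₀ (by positivity)]; exact hCS
    calc s * (Real.sinh x^2/(x*Real.exp x)) ≤ s * ∑' m, c m / w m :=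
          mul_le_mul_of_nonneg_left hU_ge hs0.le
      _ = ∑' m, s * (c m / w m) := (tsum_mul_left).symm
      _ ≤ ∑' m, T m := Summable.tsum_le_tsum hT_lo (hsu.mul_left s) hsT
  have hexp20 : (20:ℝ) ≤ Real.exp x := by
    have h1 : Real.exp 3 ≤ Real.exp x := Real.exp_le_exp.2 hx
    linarith [exp_three_ge_twenty]
  have hsinh_ge : (399/800) * Real.exp x ≤ Real.sinh x := by
    rw [Real.sinh_eq]
    have h1 : Real.exp (-x) = 1 / Real.exp x := by
      rw [Real.exp_neg]; exact (one_div _).symm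
    have h2 : 1/Real.exp x ≤ Real.exp x/400 := by
      rw [div_le_div_iff₀ (Real.exp_pos x) (by norm_num)]
      nlinarith [hexp20]
    linarith
  have hlo : (1/10) * (Real.exp x / s) < besselINegOne x := by
    rw [hbessel]
    have heq : s * (Real.sinh x^2/(x*Real.exp x)) = Real.sinh x^2/(s*Real.exp x) := by
      rw [← hs2]; field_simp
    have hsq : ((399/800)*Real.exp x)^2 ≤ Real.sinh x^2 :=
      pow_le_pow_left₀ (by positivity) hsinh_ge 2
    have key : (1/10) * (Real.exp x / s) < Real.sinh x^2/(s*Real.exp x) := by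
      rw [show (1/10)*(Real.exp x/s) = Real.exp x/(10*s) from by ring,
        div_lt_div_iff₀ (by positivity) (by positivity)]
      nlinarith [hsq, mul_pos hs0 (mul_pos (Real.exp_pos x) (Real.exp_pos x)), hs0,
        Real.exp_pos x]
    calc (1/10) * (Real.exp x / s) < Real.sinh x^2/(s*Real.exp x) := key
      _ = s * (Real.sinh x^2/(x*Real.exp x)) := heq.symm
      _ ≤ ∑' m, T m := hlow_sum
  exact ⟨hlo, hup⟩
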